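/- For the graphon G from the recursive diagonal construction, the black set G⁻¹({1}) is dense in [0,1]², and the white set G⁻¹({0}) is nowhere dense; consequently G is not almost everywhere continuous with respect to the standard topology, since G⁻¹({0}) is a nowhere dense set of positive Lebesgue measure. -/

import Mathlib

open MeasureTheory

noncomputable def muI : Measure ℝ := volume.restrict (Set.Icc 0 1)

noncomputable def mu2 : Measure (ℝ × ℝ) := muI.prod muI

/-- Cumulative exponent: at stage `n` of the construction the dyadic squares have side
`2 ^ (-(1 + 2 + ⋯ + n))`. -/
def cexp (n : ℕ) : ℕ := n * (n + 1) / 2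

/-- The stage-`n` sub-index of `x`: the position (among the `2ⁿ` subintervals) of `x`
within its stage-`(n-1)` dyadic interval. -/
noncomputable def idx (n : ℕ) (x : ℝ) : ℤ := ⌊x * 2 ^ cexp n⌋ % 2 ^ n

open Classical in
/-- The recursive diagonal graphon: at each stage `n ≥ 1`, within each still-white dyadic
square, the `2ⁿ` diagonal dyadic subsquares are colored black (value `1`); a point stays
white (value `0`) iff its sub-indices differ at every stage. -/
noncomputable def diagGraphon (p : ℝ × ℝ) : ℝ :=
  if ∀ n : ℕ, 1 ≤ n → idx n p.1 ≠ idx n p.2 then 0 else 1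

open Set ENNReal

lemma measurable_idx (n : ℕ) : Measurable (idx n) := by
  unfold idx
  have h1 : Measurable fun x : ℝ => ⌊x * 2 ^ cexp n⌋ :=
    Int.measurable_floor.comp (measurable_id.mul_const _)
  exact (measurable_of_countable (fun z : ℤ => z % 2 ^ n)).comp h1

lemma muI_eq_vol_Ico (S : Set ℝ) (hS : MeasurableSet S) :
    muI S = volume {y ∈ Ico (0:ℝ) 1 | y ∈ S} := by
  rw [muI, Measure.restrict_apply hS]
  have heq : {y ∈ Ico (0:ℝ) 1 | y ∈ S} = S ∩ Ico 0 1 := by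
    ext y; simp only [mem_setOf_eq, mem_inter_iff, mem_Ico]; tauto
  rw [heq]
  apply le_antisymm
  · have h1 : S ∩ Icc 0 1 ⊆ (S ∩ Ico 0 1) ∪ {1} := by
      rintro x ⟨hxS, hx0, hx1⟩
      rcases lt_or_eq_of_le hx1 with h | h
      · exact Or.inl ⟨hxS, hx0, h⟩
      · exact Or.inr (by simp [h])
    calc volume (S ∩ Icc 0 1) ≤ volume ((S ∩ Ico 0 1) ∪ {1}) := measure_mono h1
      _ ≤ volume (S ∩ Ico 0 1) + volume {1} := measure_union_le _ _
      _ = volume (S ∩ Ico 0 1) := by simp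
  · exact measure_mono (inter_subset_inter_right _ Ico_subset_Icc_self)

lemma muI_univ : muI univ = 1 := by
  rw [muI, Measure.restrict_apply_univ, Real.volume_Icc]
  norm_num

instance : IsProbabilityMeasure muI := ⟨muI_univ⟩

instance : IsProbabilityMeasure mu2 := by
  constructor
  rw [mu2, ← Set.univ_prod_univ, Measure.prod_prod, muI_univ, one_mul]

lemma floor_interval (N : ℕ) (hN : 0 < N) (k : ℕ) :
    {y : ℝ | ⌊y * N⌋ = k} = Ico ((k:ℝ)/N) ((k+1)/N) := by
  ext y
  have hN' : (0:ℝ) < N := by positivity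
  rw [mem_setOf_eq, Int.floor_eq_iff]
  constructor
  · rintro ⟨h1, h2⟩
    constructor
    · rw [div_le_iff₀ hN']; push_cast at h1 ⊢; linarith
    · rw [lt_div_iff₀ hN']; push_cast at h2 ⊢; linarith
  · rintro ⟨h1, h2⟩
    rw [div_le_iff₀ hN'] at h1
    rw [lt_div_iff₀ hN'] at h2
    constructor
    · push_cast at h1 ⊢; linarith
    · push_cast at h2 ⊢; linarith

lemma master_vol (N : ℕ) (hN : 0 < N) (P : ℤ → Prop) [DecidablePred P] :
    volume {y ∈ Ico (0:ℝ) 1 | P ⌊y * N⌋} =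
      ((Finset.range N).filter (fun k : ℕ => P (k:ℤ))).card * (N : ℝ≥0∞)⁻¹ := by
  have hN' : (0:ℝ) < N := by positivity
  have hset : {y ∈ Ico (0:ℝ) 1 | P ⌊y * N⌋} =
      ⋃ k ∈ (Finset.range N).filter (fun k : ℕ => P (k:ℤ)),
        Ico ((k:ℝ)/N) ((k+1)/N) := by
    ext y
    simp only [mem_setOf_eq, Finset.mem_filter, Finset.mem_range, mem_iUnion, exists_prop]
    constructor
    · rintro ⟨⟨hy0, hy1⟩, hP⟩
      have h0 : (0:ℤ) ≤ ⌊y * N⌋ := Int.floor_nonneg.2 (by positivity)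
      have h1 : ⌊y * N⌋ < (N:ℤ) := by
        apply Int.floor_lt.2; push_cast; nlinarith
      refine ⟨⌊y * N⌋.toNat, ⟨?_, ?_⟩, ?_⟩
      · omega
      · rwa [Int.toNat_of_nonneg h0]
      · rw [← floor_interval N hN ⌊y * N⌋.toNat, mem_setOf_eq, Int.toNat_of_nonneg h0]
    · rintro ⟨k, ⟨hk, hP⟩, hy⟩
      have hfl : ⌊y * N⌋ = k := by
        have h : y ∈ {y : ℝ | ⌊y * (N:ℝ)⌋ = (k:ℤ)} := by
          rw [floor_interval N hN k]; exact hy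
        exact h
      have hk1 : ((k:ℝ)+1)/N ≤ 1 := by
        rw [div_le_one hN']
        have : (k:ℝ) + 1 ≤ (N:ℝ) := by exact_mod_cast Nat.succ_le_of_lt hk
        linarith
      have hk0 : (0:ℝ) ≤ (k:ℝ)/N := by positivity
      exact ⟨⟨le_trans hk0 hy.1, lt_of_lt_of_le hy.2 hk1⟩, by rw [hfl]; exact hP⟩
  rw [hset, measure_biUnion_finset]
  · have hvol : ∀ k ∈ (Finset.range N).filter (fun k : ℕ => P (k:ℤ)),
        volume (Ico ((k:ℝ)/N) ((k+1)/N)) = (N : ℝ≥0∞)⁻¹ := by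
      intro k _
      rw [Real.volume_Ico]
      have h2 : ((k:ℝ)+1)/N - k/N = (N:ℝ)⁻¹ := by field_simp; ring
      rw [h2, ENNReal.ofReal_inv_of_pos hN', ENNReal.ofReal_natCast]
    rw [Finset.sum_congr rfl hvol, Finset.sum_const, nsmul_eq_mul]
  · intro i hi j hj hij
    have key : ∀ a b : ℕ, a < b → Disjoint (Ico ((a:ℝ)/N) ((a+1)/N)) (Ico ((b:ℝ)/N) ((b+1)/N)) := by
      intro a b hab
      apply Set.Ico_disjoint_Ico.2
      have hle : ((a:ℝ)+1)/N ≤ (b:ℝ)/N := by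
        gcongr
        exact_mod_cast Nat.succ_le_of_lt hab
      exact (min_le_left _ _).trans (hle.trans (le_max_right _ _))
    rcases lt_or_gt_of_ne hij with h | h
    · exact key i j h
    · exact (key j i h).symm
  · intro k _; exact measurableSet_Ico

lemma count_mod (N m r : ℕ) (hm : 0 < m) (hdvd : m ∣ N) (hr : r < m) :
    ((Finset.range N).filter (fun k : ℕ => k % m = r)).card = N / m := by
  rw [← Finset.card_range (N / m)]
  symm
  apply Finset.card_nbij' (fun j => j * m + r) (fun k => k / m)
  · intro j hj
    simp only [Finset.mem_coe, Finset.mem_range] at hj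
    simp only [Finset.mem_coe, Finset.mem_filter, Finset.mem_range]
    obtain ⟨q, rfl⟩ := hdvd
    rw [Nat.mul_div_cancel_left q hm] at hj
    refine ⟨?_, by rw [Nat.mul_comm, Nat.mul_add_mod, Nat.mod_eq_of_lt hr]⟩
    have h1 : (j + 1) * m ≤ q * m := Nat.mul_le_mul_right m (by omega)
    have h2 : (j+1)*m = j*m+m := by ring
    have h3 : m*q = q*m := Nat.mul_comm m q
    omega
  · intro k hk
    simp only [Finset.mem_coe, Finset.mem_filter, Finset.mem_range] at hk
    simp only [Finset.mem_coe, Finset.mem_range]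
    exact Nat.div_lt_div_of_lt_of_dvd hdvd hk.1
  · intro j _
    beta_reduce
    rw [Nat.mul_comm, Nat.mul_add_div hm, Nat.div_eq_of_lt hr, Nat.add_zero]
  · intro k hk
    simp only [Finset.mem_coe, Finset.mem_filter, Finset.mem_range] at hk
    beta_reduce
    have h := Nat.div_add_mod k m
    have h2 : m * (k/m) = (k/m) * m := Nat.mul_comm _ _
    omega

lemma enn_pow_cancel (a b : ℕ) : (2:ℝ≥0∞)^a * ((2:ℝ≥0∞)^(a+b))⁻¹ = ((2:ℝ≥0∞)^b)⁻¹ := by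
  rw [pow_add, ENNReal.mul_inv (Or.inl (by positivity)) (Or.inl (ENNReal.pow_ne_top ENNReal.ofNat_ne_top)),
    ← mul_assoc, ENNReal.mul_inv_cancel (by positivity) (ENNReal.pow_ne_top ENNReal.ofNat_ne_top), one_mul]

lemma muI_idx_eq (n : ℕ) (hn : 1 ≤ n) (r : ℤ) (hr0 : 0 ≤ r) (hr : r < 2^n) :
    muI {y | idx n y = r} = ((2:ℝ≥0∞)^n)⁻¹ := by
  have hmeas : MeasurableSet {y : ℝ | idx n y = r} :=
    measurable_idx n (MeasurableSet.singleton r)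
  rw [muI_eq_vol_Ico _ hmeas]
  have hcast : ((2^cexp n : ℕ) : ℝ) = (2:ℝ)^cexp n := by push_cast; ring
  have hset : {y ∈ Ico (0:ℝ) 1 | y ∈ {y | idx n y = r}} =
      {y ∈ Ico (0:ℝ) 1 | (fun k : ℤ => k % 2^n = r) ⌊y * ((2^cexp n : ℕ) : ℝ)⌋} := by
    ext y; rw [hcast]; rfl
  rw [hset, master_vol _ (Nat.two_pow_pos _) (fun k : ℤ => k % 2^n = r)]
  have hpow : ((2^n : ℕ) : ℤ) = (2:ℤ)^n := by push_cast; ring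
  have hcond : ∀ k : ℕ, ((k:ℤ) % 2^n = r) ↔ (k % 2^n = r.toNat) := by
    intro k
    rw [← hpow, ← Int.natCast_mod]
    generalize k % 2^n = K
    omega
  rw [Finset.filter_congr (fun k _ => by rw [hcond k])]
  have hle : n ≤ cexp n := by
    unfold cexp; rcases Nat.exists_eq_add_of_le hn with ⟨m, rfl⟩
    have : (1+m)*(1+m+1) = (1+m)*2 + ((1+m)*m) := by ring
    omega
  rw [count_mod _ _ _ (Nat.two_pow_pos _)
    (pow_dvd_pow 2 hle) (by rw [← hpow] at hr; omega)]

  rw [Nat.pow_div hle (by norm_num)]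
  have h1 : ((2^(cexp n - n) : ℕ) : ℝ≥0∞) = (2:ℝ≥0∞)^(cexp n - n) := by push_cast; ring
  have h2 : ((2^cexp n : ℕ) : ℝ≥0∞) = (2:ℝ≥0∞)^((cexp n - n) + n) := by
    push_cast; rw [Nat.sub_add_cancel hle]
  rw [h1, h2, enn_pow_cancel]

lemma floor_quarter (y : ℝ) : ⌊y * 2⌋ = ⌊y * 8⌋ / 4 := by
  have hk1 : ((⌊y * 8⌋ : ℝ)) ≤ y * 8 := Int.floor_le _
  have hk2 : y * 8 < ⌊y * 8⌋ + 1 := Int.lt_floor_add_one _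
  have hq : ⌊y * 8⌋ = 4 * (⌊y * 8⌋ / 4) + ⌊y * 8⌋ % 4 := (Int.mul_ediv_add_emod _ 4).symm
  have h40 : (0:ℤ) ≤ ⌊y * 8⌋ % 4 := Int.emod_nonneg _ (by norm_num)
  have h44 : ⌊y * 8⌋ % 4 < 4 := Int.emod_lt_of_pos _ (by norm_num)
  rw [Int.floor_eq_iff]
  set q := ⌊y * 8⌋ / 4 with hqdef
  set r := ⌊y * 8⌋ % 4 with hrdef
  have hcast : ((⌊y * 8⌋ : ℝ)) = 4 * q + r := by exact_mod_cast congrArg (Int.cast : ℤ → ℝ) hq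
  have h8 : y * 8 = (y * 2) * 4 := by ring
  constructor
  · have : (0:ℝ) ≤ (r:ℝ) := by exact_mod_cast h40
    linarith
  · have : (r:ℝ) ≤ 3 := by exact_mod_cast (by omega : r ≤ 3)
    linarith

lemma muI_idx12_eq (r1 r2 : ℤ) (h10 : 0 ≤ r1) (h11 : r1 < 2) (h20 : 0 ≤ r2) (h21 : r2 < 4) :
    muI {y | idx 1 y = r1 ∧ idx 2 y = r2} = ((2:ℝ≥0∞)^3)⁻¹ := by
  have hmeas : MeasurableSet {y : ℝ | idx 1 y = r1 ∧ idx 2 y = r2} := by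
    have h1 := measurable_idx 1 (MeasurableSet.singleton r1)
    have h2 := measurable_idx 2 (MeasurableSet.singleton r2)
    exact h1.inter h2
  rw [muI_eq_vol_Ico _ hmeas]
  have hset : {y ∈ Ico (0:ℝ) 1 | y ∈ {y | idx 1 y = r1 ∧ idx 2 y = r2}} =
      {y ∈ Ico (0:ℝ) 1 | (fun k : ℤ => k / 4 % 2 = r1 ∧ k % 4 = r2) ⌊y * ((8:ℕ) : ℝ)⌋} := by
    ext y
    simp only [mem_setOf_eq, and_congr_right_iff]
    intro _
    have e1 : idx 1 y = ⌊y * 2⌋ % 2 := by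
      unfold idx cexp; norm_num
    have e2 : idx 2 y = ⌊y * 8⌋ % 4 := by
      unfold idx cexp; norm_num
    have e3 : (((8:ℕ)):ℝ) = (8:ℝ) := by norm_num
    rw [e1, e2, e3, floor_quarter]
  rw [hset, master_vol 8 (by norm_num) (fun k : ℤ => k / 4 % 2 = r1 ∧ k % 4 = r2)]
  have hcard : ((Finset.range 8).filter
      (fun k : ℕ => ((k:ℤ) / 4 % 2 = r1 ∧ (k:ℤ) % 4 = r2))).card = 1 := by
    interval_cases r1 <;> interval_cases r2 <;> decide
  rw [hcard]
  norm_num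

def Bset (n : ℕ) : Set (ℝ × ℝ) := {p | idx n p.1 = idx n p.2}

lemma Bset_meas (n : ℕ) : MeasurableSet (Bset n) :=
  measurableSet_eq_fun ((measurable_idx n).comp measurable_fst)
    ((measurable_idx n).comp measurable_snd)

lemma idx_nonneg (n : ℕ) (x : ℝ) : 0 ≤ idx n x := Int.emod_nonneg _ (by positivity)

lemma idx_lt (n : ℕ) (x : ℝ) : idx n x < 2 ^ n := Int.emod_lt_of_pos _ (by positivity)

lemma mu2_Bset (n : ℕ) (hn : 1 ≤ n) : mu2 (Bset n) = ((2:ℝ≥0∞)^n)⁻¹ := by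
  rw [mu2, Measure.prod_apply (Bset_meas n)]
  have hslice : ∀ x : ℝ, muI (Prod.mk x ⁻¹' Bset n) = ((2:ℝ≥0∞)^n)⁻¹ := by
    intro x
    have : Prod.mk x ⁻¹' Bset n = {y | idx n y = idx n x} := by
      ext y; simp only [mem_preimage, Bset, mem_setOf_eq]; exact eq_comm
    rw [this, muI_idx_eq n hn _ (idx_nonneg n x) (idx_lt n x)]
  simp only [hslice]
  rw [lintegral_const, muI_univ, mul_one]

lemma mu2_B12 : mu2 (Bset 1 ∩ Bset 2) = ((2:ℝ≥0∞)^3)⁻¹ := by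
  rw [mu2, Measure.prod_apply ((Bset_meas 1).inter (Bset_meas 2))]
  have hslice : ∀ x : ℝ, muI (Prod.mk x ⁻¹' (Bset 1 ∩ Bset 2)) = ((2:ℝ≥0∞)^3)⁻¹ := by
    intro x
    have : Prod.mk x ⁻¹' (Bset 1 ∩ Bset 2) = {y | idx 1 y = idx 1 x ∧ idx 2 y = idx 2 x} := by
      ext y
      simp only [mem_preimage, Bset, mem_inter_iff, mem_setOf_eq]
      rw [eq_comm (a := idx 1 x), eq_comm (a := idx 2 x)]
    rw [this, muI_idx12_eq _ _ (idx_nonneg 1 x) (idx_lt 1 x) (idx_nonneg 2 x) (idx_lt 2 x)]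
  simp only [hslice]
  rw [lintegral_const, muI_univ, mul_one]

lemma enn_sum_one : (((2:ℝ≥0∞)^1)⁻¹ + ((2:ℝ≥0∞)^2)⁻¹) + ((2:ℝ≥0∞)^2)⁻¹ = 1 := by
  rw [pow_one, pow_two, ENNReal.mul_inv (Or.inl (by norm_num)) (Or.inl (by norm_num))]
  rw [show (2:ℝ≥0∞)⁻¹ + 2⁻¹*2⁻¹ + 2⁻¹*2⁻¹ = 2⁻¹ + (2*2⁻¹)*2⁻¹ by ring]
  rw [ENNReal.mul_inv_cancel (by norm_num) (by norm_num), one_mul, ENNReal.inv_two_add_inv_two]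

lemma mu2_tail : mu2 (⋃ k, Bset (k+3)) ≤ ((2:ℝ≥0∞)^2)⁻¹ := by
  refine (measure_iUnion_le _).trans ?_
  have h : ∀ k : ℕ, mu2 (Bset (k+3)) = (2⁻¹:ℝ≥0∞)^k * ((2⁻¹:ℝ≥0∞)^3) := by
    intro k
    rw [mu2_Bset (k+3) (by omega), pow_add,
      ENNReal.mul_inv (Or.inl (by norm_num)) (Or.inl (by norm_num)),
      ← ENNReal.inv_pow, ← ENNReal.inv_pow]
  rw [tsum_congr h, ENNReal.tsum_mul_right, ENNReal.tsum_geometric, ENNReal.one_sub_inv_two,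
    inv_inv]
  rw [pow_succ', ← mul_assoc, ENNReal.mul_inv_cancel (by norm_num) (by norm_num), one_mul,
    ← ENNReal.inv_pow]

lemma mu2_U_bound : mu2 (⋃ n, ⋃ (_ : 1 ≤ n), Bset n) + ((2:ℝ≥0∞)^3)⁻¹ ≤ 1 := by
  have hsub : (⋃ n, ⋃ (_ : 1 ≤ n), Bset n) ⊆ (Bset 1 ∪ Bset 2) ∪ ⋃ k, Bset (k+3) := by
    intro p hp
    simp only [mem_iUnion, exists_prop] at hp
    obtain ⟨n, hn, hpn⟩ := hp
    match n, hn with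
    | 1, _ => exact Or.inl (Or.inl hpn)
    | 2, _ => exact Or.inl (Or.inr hpn)
    | (k+3), _ => exact Or.inr (mem_iUnion.2 ⟨k, hpn⟩)
  calc mu2 (⋃ n, ⋃ (_ : 1 ≤ n), Bset n) + ((2:ℝ≥0∞)^3)⁻¹
      ≤ (mu2 (Bset 1 ∪ Bset 2) + mu2 (⋃ k, Bset (k+3))) + ((2:ℝ≥0∞)^3)⁻¹ := by
        gcongr
        exact (measure_mono hsub).trans (measure_union_le _ _)
    _ = (mu2 (Bset 1 ∪ Bset 2) + mu2 (Bset 1 ∩ Bset 2)) + mu2 (⋃ k, Bset (k+3)) := by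
        rw [mu2_B12]; ring
    _ = (mu2 (Bset 1) + mu2 (Bset 2)) + mu2 (⋃ k, Bset (k+3)) := by
        rw [measure_union_add_inter _ (Bset_meas 2)]
    _ ≤ (((2:ℝ≥0∞)^1)⁻¹ + ((2:ℝ≥0∞)^2)⁻¹) + ((2:ℝ≥0∞)^2)⁻¹ := by
        rw [mu2_Bset 1 le_rfl, mu2_Bset 2 (by omega)]
        gcongr
        exact mu2_tail
    _ = 1 := enn_sum_one

lemma square_mem (n a b : ℕ) (hn : 1 ≤ n) (ha : a < 2^cexp n) (hb : b < 2^cexp n)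
    (hab : a % 2^n = b % 2^n) (q : ℝ × ℝ)
    (hq : q ∈ Ioo ((a:ℝ)/((2^cexp n : ℕ):ℝ)) ((a+1)/((2^cexp n : ℕ):ℝ)) ×ˢ
      Ioo ((b:ℝ)/((2^cexp n : ℕ):ℝ)) ((b+1)/((2^cexp n : ℕ):ℝ))) :
    diagGraphon q = 1 ∧ q ∈ Set.Icc (0:ℝ) 1 ×ˢ Set.Icc (0:ℝ) 1 := by
  obtain ⟨hq1, hq2⟩ := hq
  set N : ℕ := 2^cexp n with hNdef
  have hN : 0 < N := Nat.two_pow_pos _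
  have hN' : (0:ℝ) < N := by positivity
  have hfl : ∀ (k : ℕ) (x : ℝ), x ∈ Ioo ((k:ℝ)/N) ((k+1)/N) → ⌊x * N⌋ = k := by
    intro k x hx
    have : x ∈ {y : ℝ | ⌊y * N⌋ = k} := by
      rw [floor_interval N hN k]
      exact ⟨hx.1.le, hx.2⟩
    exact this
  have hcast : ((N:ℕ):ℝ) = (2:ℝ)^cexp n := by rw [hNdef]; rw [Nat.cast_pow]; norm_num
  have hidx : ∀ (k : ℕ) (x : ℝ), x ∈ Ioo ((k:ℝ)/N) ((k+1)/N) → idx n x = (k:ℤ) % 2^n := by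
    intro k x hx
    unfold idx
    rw [← hcast, hfl k x hx]
  have hmod : ((a:ℤ)) % 2^n = ((b:ℤ)) % 2^n := by
    have h2 : ((a % 2^n : ℕ):ℤ) = ((b % 2^n : ℕ):ℤ) := by exact_mod_cast hab
    rw [Int.natCast_mod, Int.natCast_mod] at h2
    push_cast at h2
    exact h2
  constructor
  · unfold diagGraphon
    rw [if_neg]
    push_neg
    refine ⟨n, hn, ?_⟩
    rw [hidx a q.1 hq1, hidx b q.2 hq2, hmod]
  · have hmem : ∀ (k : ℕ), k < N → ∀ x : ℝ, x ∈ Ioo ((k:ℝ)/N) ((k+1)/N) → x ∈ Set.Icc (0:ℝ) 1 := by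
      intro k hk x hx
      constructor
      · exact le_trans (by positivity) hx.1.le
      · refine hx.2.le.trans ?_
        rw [div_le_one hN']
        exact_mod_cast Nat.succ_le_of_lt hk
    exact ⟨hmem a ha q.1 hq1, hmem b hb q.2 hq2⟩

lemma exists_black_square (p : ℝ × ℝ) (hp : p ∈ Set.Icc (0:ℝ) 1 ×ˢ Set.Icc (0:ℝ) 1)
    (ε : ℝ) (hε : 0 < ε) :
    ∃ (n a b : ℕ), 1 ≤ n ∧ a < 2^(cexp n) ∧ b < 2^(cexp n) ∧ a % 2^n = b % 2^n ∧
      (Ioo ((a:ℝ)/((2^cexp n : ℕ):ℝ)) ((a+1)/((2^cexp n : ℕ):ℝ)) ×ˢ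
       Ioo ((b:ℝ)/((2^cexp n : ℕ):ℝ)) ((b+1)/((2^cexp n : ℕ):ℝ))) ⊆ Metric.ball p ε := by
  obtain ⟨m, hm⟩ := exists_pow_lt_of_lt_one hε (by norm_num : (1:ℝ)/2 < 1)
  set n : ℕ := m + 6 with hndef
  have hn : 1 ≤ n := by omega
  set N : ℕ := 2^cexp n with hNdef
  set M : ℕ := 2^n with hMdef
  have hN : 0 < N := Nat.two_pow_pos _
  have hM : 0 < M := Nat.two_pow_pos _
  have hN' : (0:ℝ) < N := by positivity
  have hce : m + (n + 1) ≤ cexp n := by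
    have hc2 : cexp n = (m+6)*(m+7)/2 := by simp [cexp, hndef]
    have h : (m+6)*(m+7) = m*m + 13*m + 42 := by ring
    omega
  have hnle : n ≤ cexp n := by omega
  have hdvd : M ∣ N := pow_dvd_pow 2 hnle
  -- bracketing of a coordinate
  have key : ∀ x : ℝ, x ∈ Set.Icc (0:ℝ) 1 → ∃ c : ℕ, c < N ∧ (c:ℝ)/N ≤ x ∧ x ≤ ((c:ℝ)+1)/N := by
    intro x hx
    set f : ℤ := ⌊x * N⌋ with hfdef
    have hf0 : 0 ≤ f := Int.floor_nonneg.2 (by nlinarith [hx.1])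
    have hfN : f ≤ N := by
      have : x * N ≤ N := by nlinarith [hx.2]
      calc f ≤ ⌊(N:ℝ)⌋ := Int.floor_le_floor this
        _ = (N:ℤ) := by simp
    set c : ℕ := min f.toNat (N-1) with hcdef
    refine ⟨c, by omega, ?_, ?_⟩
    · rw [div_le_iff₀ hN']
      have h1 : ((c:ℕ):ℝ) ≤ (f:ℝ) := by
        have : (c:ℤ) ≤ f := by omega
        exact_mod_cast this
      have h2 : (f:ℝ) ≤ x * N := Int.floor_le _
      linarith
    · rw [le_div_iff₀ hN']
      rcases le_or_gt f.toNat (N-1) with h | h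
      · have he : (c:ℤ) = f := by omega
        have h2 : x * N < (f:ℝ) + 1 := Int.lt_floor_add_one _
        have h3 : ((c:ℕ):ℝ) = (f:ℝ) := by exact_mod_cast he
        linarith
      · have he : (c:ℤ) + 1 = (N:ℤ) := by omega
        have h3 : ((c:ℕ):ℝ) + 1 = (N:ℝ) := by exact_mod_cast he
        nlinarith [hx.2]
  obtain ⟨a, haN, ha1, ha2⟩ := key p.1 hp.1
  obtain ⟨b0, hb0N, hb01, hb02⟩ := key p.2 hp.2
  set b : ℕ := (b0 / M) * M + a % M with hbdef
  have hbmod : b % M = a % M := by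
    rw [hbdef, Nat.mul_comm, Nat.mul_add_mod, Nat.mod_eq_of_lt (Nat.mod_lt _ hM)]
  have hbN : b < N := by
    have h1 : b0 / M < N / M := Nat.div_lt_div_of_lt_of_dvd hdvd hb0N
    have h2 : (b0 / M + 1) * M ≤ (N / M) * M := Nat.mul_le_mul_right M h1
    have h3 : (N / M) * M = N := Nat.div_mul_cancel hdvd
    have h4 : (b0/M + 1) * M = (b0/M)*M + M := by ring
    have h5 : a % M < M := Nat.mod_lt _ hM
    omega
  have hbb : b ≤ b0 + M ∧ b0 ≤ b + M := by
    have e1 : (b0/M)*M + b0 % M = b0 := by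
      rw [Nat.mul_comm]; exact Nat.div_add_mod b0 M
    have h5 : a % M < M := Nat.mod_lt _ hM
    have h6 : b0 % M < M := Nat.mod_lt _ hM
    omega
  refine ⟨n, a, b, hn, haN, hbN, hbmod.symm, ?_⟩
  rintro q ⟨hq1, hq2⟩
  rw [Metric.mem_ball, Prod.dist_eq]
  have hMN : ((M:ℝ)+1)/N < ε := by
    have hMR : (M:ℝ) = 2^n := by rw [hMdef]; rw [Nat.cast_pow]; norm_num
    have h1 : ((M:ℝ)+1) ≤ 2^(n+1) := by
      rw [pow_succ, hMR]
      have h2 : (1:ℝ) ≤ 2^n := one_le_pow₀ (by norm_num)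
      nlinarith
    have h2 : ((N:ℕ):ℝ) = 2^(n+1) * 2^(cexp n - (n+1)) := by
      rw [hNdef, Nat.cast_pow, ← pow_add]
      norm_num
      congr 1
      omega
    have s1 : ((M:ℝ)+1)/N ≤ (2:ℝ)^(n+1)/(N:ℝ) := by gcongr
    have s2 : (2:ℝ)^(n+1)/(N:ℝ) = 1 / 2^(cexp n - (n+1)) := by
      rw [h2, div_mul_eq_div_div, div_self (by positivity)]
    have h6 : (1:ℝ) / 2^(cexp n - (n+1)) ≤ 1 / 2^m := by
      gcongr
      · norm_num
      · omega
    have h7 : (1:ℝ)/2^m = ((1:ℝ)/2)^m := by rw [div_pow, one_pow]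
    linarith
  have hd1 : dist q.1 p.1 < ε := by
    rw [Real.dist_eq, abs_lt]
    have e1 : ((a:ℝ)+1)/N - (a:ℝ)/N = 1/N := by field_simp; ring
    have e2 : (1:ℝ)/N ≤ ((M:ℝ)+1)/N := by
      gcongr
      have : (0:ℝ) ≤ (M:ℝ) := by positivity
      linarith
    constructor
    · have h1 := hq1.1
      have h2 := ha2
      linarith
    · have h1 := hq1.2
      have h2 := ha1
      linarith
  have hd2 : dist q.2 p.2 < ε := by
    rw [Real.dist_eq, abs_lt]
    have hbR : (b:ℝ) ≤ (b0:ℝ) + M := by exact_mod_cast hbb.1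
    have hb0R : (b0:ℝ) ≤ (b:ℝ) + M := by exact_mod_cast hbb.2
    have e1 : ((b:ℝ)+1)/N - (b0:ℝ)/N ≤ ((M:ℝ)+1)/N := by
      rw [div_sub_div_same]
      gcongr
      linarith
    have e2 : ((b0:ℝ)+1)/N - (b:ℝ)/N ≤ ((M:ℝ)+1)/N := by
      rw [div_sub_div_same]
      gcongr
      linarith
    constructor
    · have h1 : q.2 > (b:ℝ)/N := hq2.1
      have h2 : p.2 ≤ ((b0:ℝ)+1)/N := hb02
      linarith
    · have h1 : q.2 < ((b:ℝ)+1)/N := hq2.2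
      have h2 : (b0:ℝ)/N ≤ p.2 := hb01
      linarith
  exact max_lt hd1 hd2

lemma mid_mem (k N : ℝ) (hN : 0 < N) : (k+2⁻¹)/N ∈ Ioo (k/N) ((k+1)/N) := by
  constructor
  · gcongr
    norm_num
  · gcongr
    norm_num

lemma black_near (p : ℝ × ℝ) (hp : p ∈ Set.Icc (0:ℝ) 1 ×ˢ Set.Icc (0:ℝ) 1)
    (ε : ℝ) (hε : 0 < ε) :
    ∃ Q : Set (ℝ × ℝ), IsOpen Q ∧ Q.Nonempty ∧ Q ⊆ Metric.ball p ε ∧ mu2 Q ≠ 0 ∧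
      ∀ q ∈ Q, diagGraphon q = 1 ∧ q ∈ Set.Icc (0:ℝ) 1 ×ˢ Set.Icc (0:ℝ) 1 := by
  obtain ⟨n, a, b, hn, ha, hb, hab, hsub⟩ := exists_black_square p hp ε hε
  set N' : ℝ := ((2^cexp n : ℕ):ℝ) with hN'def
  have hN' : (0:ℝ) < N' := by rw [hN'def]; positivity
  refine ⟨Ioo ((a:ℝ)/N') ((a+1)/N') ×ˢ Ioo ((b:ℝ)/N') ((b+1)/N'),
    (isOpen_Ioo.prod isOpen_Ioo), ⟨(((a:ℝ)+2⁻¹)/N', ((b:ℝ)+2⁻¹)/N'), ?_⟩, hsub, ?_, ?_⟩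
  · exact ⟨mid_mem (a:ℝ) N' hN', mid_mem (b:ℝ) N' hN'⟩
  · rw [mu2, Measure.prod_prod]
    have hIcc : ∀ k : ℕ, k < 2^cexp n → Ioo ((k:ℝ)/N') (((k:ℝ)+1)/N') ⊆ Set.Icc (0:ℝ) 1 := by
      intro k hk
      refine Set.Ioo_subset_Icc_self.trans (Set.Icc_subset_Icc (by positivity) ?_)
      rw [div_le_one hN']
      rw [hN'def]
      exact_mod_cast Nat.succ_le_of_lt hk
    have hval : ∀ k : ℕ, k < 2^cexp n → muI (Ioo ((k:ℝ)/N') (((k:ℝ)+1)/N')) ≠ 0 := by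
      intro k hk
      rw [muI, Measure.restrict_apply measurableSet_Ioo,
        Set.inter_eq_left.2 (hIcc k hk), Real.volume_Ioo]
      have heq : ((k:ℝ)+1)/N' - (k:ℝ)/N' = 1/N' := by field_simp; ring
      rw [heq]
      exact (ENNReal.ofReal_pos.2 (by positivity)).ne'
    exact mul_ne_zero (hval a ha) (hval b hb)
  · intro q hq
    exact square_mem n a b hn ha hb hab q hq

/-- In the recursive diagonal graphon, the black set is dense in `[0,1]²`, the white set
is nowhere dense, and consequently the graphon is not almost-everywhere continuous with
respect to the standard topology: it does not restrict to a continuous function on any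
full-measure subset of `[0,1]²`. -/
theorem diagGraphon_not_ae_continuous :
    (∀ p ∈ Set.Icc (0 : ℝ) 1 ×ˢ Set.Icc (0 : ℝ) 1,
      p ∈ closure {q ∈ Set.Icc (0 : ℝ) 1 ×ˢ Set.Icc (0 : ℝ) 1 | diagGraphon q = 1}) ∧
    interior (closure {q ∈ Set.Icc (0 : ℝ) 1 ×ˢ Set.Icc (0 : ℝ) 1 | diagGraphon q = 0}) = ∅ ∧
    ¬ ∃ X : Set (ℝ × ℝ), X ⊆ Set.Icc (0 : ℝ) 1 ×ˢ Set.Icc (0 : ℝ) 1 ∧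
        mu2 X = 1 ∧ ContinuousOn diagGraphon X := by
  refine ⟨?_, ?_, ?_⟩
  · -- density of black
    intro p hp
    rw [Metric.mem_closure_iff]
    intro ε hε
    obtain ⟨Q, _, ⟨q, hqQ⟩, hQball, _, hQblack⟩ := black_near p hp ε hε
    obtain ⟨hq1, hq2⟩ := hQblack q hqQ
    exact ⟨q, ⟨hq2, hq1⟩, by rw [dist_comm]; exact hQball hqQ⟩
  · -- white nowhere dense
    rw [Set.eq_empty_iff_forall_notMem]
    intro p hp
    set Sw := {q ∈ Set.Icc (0 : ℝ) 1 ×ˢ Set.Icc (0 : ℝ) 1 | diagGraphon q = 0} with hSw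
    obtain ⟨ε, hε, hball⟩ := Metric.isOpen_iff.1 isOpen_interior p hp
    have hball' : Metric.ball p ε ⊆ closure Sw := hball.trans interior_subset
    have hpcl : p ∈ closure Sw := interior_subset hp
    have hpI : p ∈ Set.Icc (0 : ℝ) 1 ×ˢ Set.Icc (0 : ℝ) 1 := by
      have hcl : closure Sw ⊆ Set.Icc (0 : ℝ) 1 ×ˢ Set.Icc (0 : ℝ) 1 :=
        closure_minimal (Set.sep_subset _ _) (isClosed_Icc.prod isClosed_Icc)
      exact hcl hpcl
    obtain ⟨Q, hQopen, ⟨q, hqQ⟩, hQball, _, hQblack⟩ := black_near p hpI ε hε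
    have hqcl : q ∈ closure Sw := hball' (hQball hqQ)
    obtain ⟨r, hrQ, hrSw⟩ := _root_.mem_closure_iff.1 hqcl Q hQopen hqQ
    have h1 := (hQblack r hrQ).1
    have h0 := hrSw.2
    rw [h0] at h1
    norm_num at h1
  · -- not a.e. continuous
    rintro ⟨X, hXsub, hXmeas, hXcont⟩
    set U := ⋃ n, ⋃ (_ : 1 ≤ n), Bset n with hUdef
    -- a white point in X
    have hXW : ∃ p, p ∈ X ∧ p ∉ U := by
      by_contra h
      push_neg at h
      have hle : (1:ℝ≥0∞) ≤ mu2 U := by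
        rw [← hXmeas]
        exact measure_mono h
      have h2 : (1:ℝ≥0∞) + ((2:ℝ≥0∞)^3)⁻¹ ≤ 1 :=
        le_trans (add_le_add_left hle _) mu2_U_bound
      have h3 : (1:ℝ≥0∞) < 1 + ((2:ℝ≥0∞)^3)⁻¹ :=
        ENNReal.lt_add_right one_ne_top (by norm_num)
      exact absurd (h3.trans_le h2) (lt_irrefl _)
    obtain ⟨p, hpX, hpW⟩ := hXW
    have hpwhite : ∀ k : ℕ, 1 ≤ k → idx k p.1 ≠ idx k p.2 := by
      intro k hk hEq
      exact hpW (Set.mem_iUnion.2 ⟨k, Set.mem_iUnion.2 ⟨hk, hEq⟩⟩)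
    have hp0 : diagGraphon p = 0 := by
      unfold diagGraphon
      rw [if_pos hpwhite]
    obtain ⟨δ, hδ, hδ2⟩ := Metric.continuousWithinAt_iff.1 (hXcont p hpX) 2⁻¹ (by norm_num)
    obtain ⟨Q, hQopen, hQne, hQball, hQ0, hQblack⟩ := black_near p (hXsub hpX) δ hδ
    have hQX : ∃ q, q ∈ X ∧ q ∈ Q := by
      by_contra h
      push_neg at h
      have hXQc : X ⊆ Qᶜ := fun x hx => h x hx
      have hle : (1:ℝ≥0∞) ≤ mu2 Qᶜ := by
        rw [← hXmeas]; exact measure_mono hXQc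
      have hQc : mu2 Qᶜ = 1 - mu2 Q := prob_compl_eq_one_sub hQopen.measurableSet
      have hlt : mu2 Qᶜ < 1 := by
        rw [hQc]
        exact ENNReal.sub_lt_self one_ne_top one_ne_zero hQ0
      exact absurd (hle.trans_lt hlt) (lt_irrefl _)
    obtain ⟨q, hqX, hqQ⟩ := hQX
    have hq1 : diagGraphon q = 1 := (hQblack q hqQ).1
    have hdist : dist q p < δ := hQball hqQ
    have := hδ2 hqX hdist
    rw [hq1, hp0, Real.dist_eq] at this
    norm_num at this
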